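/- For a rational disparity d = p/q with p ∈ ℤ, q ∈ ℕ, q > 0 and p, q coprime, two views record the same point set exactly when their indices are congruent modulo q: for all u, u' ∈ ℤ, S_u(d) = S_{u'}(d) ↔ (q : ℤ) ∣ (u − u'). (E.g., for d = 1/5, views u, u+5, u+10, … sample the same point set while intermediate views sample different point sets.) -/

import Mathlib

/-- The set of 1D scene positions recorded by the view with index `u`
for a scene with common disparity `d`. -/
def recordedSet (u : ℤ) (d : ℝ) : Set ℝ :=
  {s : ℝ | ∃ n : ℤ, s = (n : ℝ) + (u : ℝ) * d}

/-- For rational disparity `d = p/q` in lowest terms, two views record the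
same point set exactly when their indices are congruent modulo `q`. -/
theorem same_point_set_iff_congruent_mod_q (p : ℤ) (q : ℕ) (hq : 0 < q)
    (hcop : Nat.Coprime p.natAbs q) (d : ℝ) (hd : d = (p : ℝ) / (q : ℝ)) :
    ∀ u u' : ℤ, recordedSet u d = recordedSet u' d ↔ (q : ℤ) ∣ (u - u') := by
  intro u u'
  have hq0 : (q : ℝ) ≠ 0 := Nat.cast_ne_zero.mpr hq.ne'
  constructor
  · intro h
    -- u*d ∈ recordedSet u d (with n = 0)
    have hmem : ((u : ℝ) * d) ∈ recordedSet u d := ⟨0, by simp⟩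
    rw [h] at hmem
    obtain ⟨n, hn⟩ := hmem
    -- (u - u') * d = n
    have hreal : ((u : ℝ) - u') * d = n := by linarith [hn]
    rw [hd] at hreal
    have h2 : ((u : ℝ) - u') * p = n * q := by
      field_simp at hreal
      linarith [hreal]
    have h3 : (u - u') * p = n * q := by exact_mod_cast h2
    have hdvd : (q : ℤ) ∣ (u - u') * p := ⟨n, by linarith [h3]⟩
    have hcop' : IsCoprime (q : ℤ) p := by
      rw [Int.isCoprime_iff_gcd_eq_one, Int.gcd]
      simpa [Nat.coprime_comm] using hcop
    exact hcop'.dvd_of_dvd_mul_right hdvd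
  · rintro ⟨k, hk⟩
    -- (u - u') * d = k * p
    have hreal : ((u : ℝ) - u') * d = (k * p : ℤ) := by
      rw [hd]
      have : ((u : ℝ) - u') = (q : ℝ) * k := by exact_mod_cast congrArg (Int.cast : ℤ → ℝ) hk
      rw [this]
      field_simp
      push_cast
      ring
    ext s
    constructor
    · rintro ⟨n, hn⟩
      exact ⟨n + k * p, by push_cast; push_cast at hreal; linarith [hreal]⟩
    · rintro ⟨n, hn⟩
      exact ⟨n - k * p, by push_cast; push_cast at hreal; linarith [hreal]⟩
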